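/- Let Ω be nonempty, X : Ω → 𝕏 and Y : Ω → 𝕐 uncertain variables with finite ranges, and g : 𝕏 → 𝕌 any function; set U = g ∘ X. Then for every y ∈ ⟦Y⟧, |⟦X⟧| − |⟦U⟧| ≥ |⟦X | Y = y⟧| − |⟦U | Y = y⟧|. -/

import Mathlib

open Set

/-- Conditional range ⟦X | Y = y⟧ = {X ω : Y ω = y}. -/
def crange {Ω 𝕏 𝕐 : Type*} (X : Ω → 𝕏) (Y : Ω → 𝕐) (y : 𝕐) : Set 𝕏 :=
  {x | ∃ ω, Y ω = y ∧ X ω = x}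

/-- min_{y ∈ ⟦Y⟧} |⟦X | Y = y⟧|. -/
noncomputable def minCond {Ω 𝕏 𝕐 : Type*} (X : Ω → 𝕏) (Y : Ω → 𝕐) : ℕ :=
  sInf ((fun y => (crange X Y y).ncard) '' Set.range Y)

/-- Non-stochastic brute-force guessing leakage
L(X → Y) = log₂(|⟦X⟧| / min_{y ∈ ⟦Y⟧} |⟦X|Y=y⟧|). -/
noncomputable def leak {Ω 𝕏 𝕐 : Type*} (X : Ω → 𝕏) (Y : Ω → 𝕐) : ℝ :=
  Real.logb 2 (((Set.range X).ncard : ℝ) / (minCond X Y : ℝ))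

/-- Maximal non-stochastic brute-force leakage (closed formula)
L⋆(X → Y) = log₂(|⟦X⟧| − min_{y∈⟦Y⟧}|⟦X|Y=y⟧| + 1). -/
noncomputable def maxLeak {Ω 𝕏 𝕐 : Type*} (X : Ω → 𝕏) (Y : Ω → 𝕐) : ℝ :=
  Real.logb 2 (((Set.range X).ncard : ℝ) - (minCond X Y : ℝ) + 1)

lemma aux_card {𝕏 𝕌 : Type*} (g : 𝕏 → 𝕌) {A B : Set 𝕏} (hB : B.Finite) (hAB : A ⊆ B) :
    (A.ncard : ℤ) - ((g '' A).ncard : ℤ) ≤ (B.ncard : ℤ) - ((g '' B).ncard : ℤ) := by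
  have hA : A.Finite := hB.subset hAB
  have h1 : g '' B ⊆ g '' A ∪ g '' (B \ A) := by
    rw [← image_union, union_diff_cancel hAB]
  have h2 : (g '' B).ncard ≤ (g '' A).ncard + (g '' (B \ A)).ncard := by
    refine le_trans (ncard_le_ncard h1 ?_) (ncard_union_le _ _)
    exact ((hA.image g).union ((hB.diff (t := A)).image g))
  have h3 : (g '' (B \ A)).ncard ≤ (B \ A).ncard := ncard_image_le (hB.diff (t := A))
  have h4 : (B \ A).ncard = B.ncard - A.ncard := ncard_diff hAB hA
  have h5 : A.ncard ≤ B.ncard := ncard_le_ncard hAB hB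
  omega

theorem stmt_4 {Ω 𝕏 𝕐 𝕌 : Type*} [Nonempty Ω] (X : Ω → 𝕏) (Y : Ω → 𝕐) (g : 𝕏 → 𝕌)
    (hX : (Set.range X).Finite) (hY : (Set.range Y).Finite) :
    ∀ y ∈ Set.range Y,
      ((crange X Y y).ncard : ℤ) - ((crange (g ∘ X) Y y).ncard : ℤ) ≤
        ((Set.range X).ncard : ℤ) - ((Set.range (g ∘ X)).ncard : ℤ) := by
  intro y hy
  have h1 : crange (g ∘ X) Y y = g '' crange X Y y := by
    ext u; constructor
    · rintro ⟨ω, hω, rfl⟩; exact ⟨X ω, ⟨ω, hω, rfl⟩, rfl⟩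
    · rintro ⟨x, ⟨ω, hω, rfl⟩, rfl⟩; exact ⟨ω, hω, rfl⟩
  have h2 : Set.range (g ∘ X) = g '' Set.range X := Set.range_comp g X
  rw [h1, h2]
  exact aux_card g hX (fun x ⟨ω, _, hω⟩ => ⟨ω, hω⟩)
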